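/- Let x ∈ ℝ^d be a random vector with E[x_i²] < ∞ for every i, let ε be the multinomial dropout noise with parameters (p_1,…,p_d; k) independent of x, and let q(z) = 1/(1 + exp(−z/2)). Define the approximate dropout regularizer R̂(w) = (1/2)·E_x[ q(wᵀx)(1 − q(wᵀx)) · Var_ε(wᵀ(x∘ε)) ]. Then for every w ∈ ℝ^d, R̂(w) ≤ (1/(8k))·( Σ_{i=1}^d w_i² E[x_i²]/p_i − E[(wᵀx)²] ). -/

import Mathlib

open MeasureTheory ProbabilityTheory


section Aux
variable {d : ℕ} {Ω' : Type*} [MeasurableSpace Ω'] {ν : Measure Ω'} [IsProbabilityMeasure ν]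

omit [MeasurableSpace Ω'] in
lemma cat_rep (T0 : Ω' → Fin d) (g : Fin d → ℝ) (ω' : Ω') :
    g (T0 ω') = ∑ i, Set.indicator (T0 ⁻¹' {i}) (fun _ => g i) ω' := by
  have : ∀ i : Fin d, Set.indicator (T0 ⁻¹' {i}) (fun _ => g i) ω'
      = if T0 ω' = i then g i else 0 := by
    intro i
    by_cases h : T0 ω' = i <;> simp [Set.indicator, h]
  simp only [this, Finset.sum_ite_eq, Finset.mem_univ, if_true]

lemma cat_int (T0 : Ω' → Fin d) (hT : Measurable T0) (g : Fin d → ℝ) :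
    Integrable (fun ω' => g (T0 ω')) ν := by
  have h1 : (fun ω' => g (T0 ω')) =
      fun ω' => ∑ i, Set.indicator (T0 ⁻¹' {i}) (fun _ => g i) ω' := by
    funext ω'; exact cat_rep T0 g ω'
  rw [h1]
  apply integrable_finset_sum
  intro i _
  exact (integrable_const (g i)).indicator (hT (measurableSet_singleton i))

lemma cat_exp (p : Fin d → ℝ) (hp : ∀ i, 0 ≤ p i) (T0 : Ω' → Fin d) (hT : Measurable T0)
    (hTd : ∀ i, ν {ω' | T0 ω' = i} = ENNReal.ofReal (p i)) (g : Fin d → ℝ) :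
    ∫ ω', g (T0 ω') ∂ν = ∑ i, p i * g i := by
  have h1 : (fun ω' => g (T0 ω')) =
      fun ω' => ∑ i, Set.indicator (T0 ⁻¹' {i}) (fun _ => g i) ω' := by
    funext ω'; exact cat_rep T0 g ω'
  rw [h1, integral_finset_sum _ (fun i (_ : i ∈ Finset.univ) =>
    (integrable_const (g i)).indicator (hT (measurableSet_singleton i)))]
  refine Finset.sum_congr rfl fun i _ => ?_
  rw [integral_indicator_const _ (hT (measurableSet_singleton i))]
  have hs : T0 ⁻¹' {i} = {ω' | T0 ω' = i} := rfl
  rw [hs, measureReal_def, hTd i, ENNReal.toReal_ofReal (hp i)]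
  simp [mul_comm]

end Aux

lemma multinomial_var {d k : ℕ} (hk : 1 ≤ k)
    {Ω' : Type*} [MeasurableSpace Ω'] (ν : Measure Ω') [IsProbabilityMeasure ν]
    (p : Fin d → ℝ) (hp : ∀ i, 0 < p i)
    (T : Fin k → Ω' → Fin d) (hTmeas : ∀ j, Measurable (T j))
    (hTindep : iIndepFun T ν)
    (hTdist : ∀ j i, ν {ω' | T j ω' = i} = ENNReal.ofReal (p i))
    (m : Fin d → Ω' → ℕ)
    (hm : ∀ i ω', m i ω' = (Finset.univ.filter (fun j => T j ω' = i)).card)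
    (x w : Fin d → ℝ) :
    (∫ ω', (∑ i, w i * (x i * ((m i ω' : ℝ) / (k * p i))) -
        ∫ ω'', ∑ i, w i * (x i * ((m i ω'' : ℝ) / (k * p i))) ∂ν) ^ 2 ∂ν)
      = (1 / k) * (∑ i, w i ^ 2 * x i ^ 2 / p i - (∑ i, w i * x i) ^ 2) := by
  have hkpos : (0 : ℝ) < k := by exact_mod_cast hk
  set g : Fin d → ℝ := fun i => w i * x i / (k * p i) with hg
  -- rewrite the weighted count sum as a sum over trials
  have hS : ∀ ω', ∑ i, w i * (x i * ((m i ω' : ℝ) / (k * p i))) = ∑ j, g (T j ω') := by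
    intro ω'
    have h1 : ∀ i : Fin d, w i * (x i * ((m i ω' : ℝ) / (k * p i)))
        = ∑ j, (if T j ω' = i then g i else 0) := by
      intro i
      have h2 : (m i ω' : ℝ) = ∑ j, (if T j ω' = i then (1 : ℝ) else 0) := by
        rw [hm]
        push_cast [Finset.card_filter]
        rfl
      rw [h2, Finset.sum_div, Finset.mul_sum, Finset.mul_sum]
      refine Finset.sum_congr rfl fun j _ => ?_
      by_cases h : T j ω' = i
      · simp only [h, if_true, hg]
        ring
      · simp [h]
    simp only [h1]
    rw [Finset.sum_comm]
    refine Finset.sum_congr rfl fun j _ => ?_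
    simp [Finset.sum_ite_eq, Finset.mem_univ]
  set E1 : ℝ := ∑ i, p i * g i with hE1
  set E2 : ℝ := ∑ i, p i * (g i * g i) with hE2
  have hEj : ∀ j, ∫ ω', g (T j ω') ∂ν = E1 := fun j =>
    cat_exp p (fun i => (hp i).le) (T j) (hTmeas j) (hTdist j) g
  have hE2j : ∀ j, ∫ ω', g (T j ω') * g (T j ω') ∂ν = E2 :=
    fun j => cat_exp p (fun i => (hp i).le) (T j) (hTmeas j) (hTdist j) (fun i => g i * g i)
  have hcross : ∀ j j', j ≠ j' → ∫ ω', g (T j ω') * g (T j' ω') ∂ν = E1 * E1 := by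
    intro j j' hne
    have hind : IndepFun (g ∘ T j) (g ∘ T j') ν :=
      (hTindep.indepFun hne).comp measurable_from_top measurable_from_top
    have key : ∫ ω', g (T j ω') * g (T j' ω') ∂ν
        = (∫ ω', g (T j ω') ∂ν) * ∫ ω', g (T j' ω') ∂ν := by
      exact hind.integral_fun_mul_eq_mul_integral (cat_int (T j) (hTmeas j) g).aestronglyMeasurable
        (cat_int (T j') (hTmeas j') g).aestronglyMeasurable
    rw [key, hEj j, hEj j']
  set S : Ω' → ℝ := fun ω' => ∑ j, g (T j ω') with hSdef
  have hSint : Integrable S ν := integrable_finset_sum _ (fun j _ => cat_int (T j) (hTmeas j) g)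
  have hES : ∫ ω', S ω' ∂ν = k * E1 := by
    rw [hSdef]
    rw [integral_finset_sum _ (fun j (_ : j ∈ Finset.univ) => cat_int (T j) (hTmeas j) g)]
    simp [hEj, Finset.sum_const, mul_comm]
  have hprodint : ∀ j j' : Fin k, Integrable (fun ω' => g (T j ω') * g (T j' ω')) ν := by
    intro j j'
    set B : ℝ := ∑ i, |g i| with hB
    have hbd : ∀ t : Fin d, |g t| ≤ B :=
      fun t => Finset.single_le_sum (fun i _ => abs_nonneg (g i)) (Finset.mem_univ t)
    refine Integrable.mono' (integrable_const (B * B)) ?_ ?_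
    · have hgm : Measurable g := measurable_from_top
      have hmg : Measurable (fun ω' => g (T j ω')) := hgm.comp (hTmeas j)
      have hmg' : Measurable (fun ω' => g (T j' ω')) := hgm.comp (hTmeas j')
      exact (hmg.mul hmg').aestronglyMeasurable
    · filter_upwards with ω'
      rw [Real.norm_eq_abs, abs_mul]
      exact mul_le_mul (hbd _) (hbd _) (abs_nonneg _)
        (le_trans (abs_nonneg _) (hbd (T j ω')))
  have hprod : ∀ j j' : Fin k, ∫ ω', g (T j ω') * g (T j' ω') ∂ν
      = if j = j' then E2 else E1 * E1 := by
    intro j j'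
    by_cases h : j = j'
    · subst h; simp [hE2j j]
    · simp [h, hcross j j' h]
  have hmulrep : (fun ω' => S ω' * S ω')
      = fun ω' => ∑ j, ∑ j', g (T j ω') * g (T j' ω') := by
    funext ω'
    rw [hSdef]
    exact Finset.sum_mul_sum _ _ _ _
  have hS2int : Integrable (fun ω' => S ω' * S ω') ν := by
    rw [hmulrep]
    exact integrable_finset_sum _ (fun j _ =>
      integrable_finset_sum _ (fun j' _ => hprodint j j'))
  have hES2 : ∫ ω', S ω' * S ω' ∂ν = k * E2 + (k * k - k) * (E1 * E1) := by
    rw [hmulrep, integral_finset_sum _ (fun j (_ : j ∈ Finset.univ) =>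
      integrable_finset_sum _ (fun j' _ => hprodint j j'))]
    have h2 : ∀ j : Fin k, ∫ ω', ∑ j', g (T j ω') * g (T j' ω') ∂ν
        = E2 + (k - 1) * (E1 * E1) := by
      intro j
      rw [integral_finset_sum _ (fun j' _ => hprodint j j')]
      simp only [hprod]
      have h3 : ∀ j' : Fin k, (if j = j' then E2 else E1 * E1)
          = E1 * E1 + (if j = j' then E2 - E1 * E1 else 0) := by
        intro j'
        by_cases h : j = j' <;> simp [h]
      simp only [h3]
      rw [Finset.sum_add_distrib, Finset.sum_const, Finset.sum_ite_eq, if_pos (Finset.mem_univ j)]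
      simp [Finset.card_univ]
      ring
    simp only [h2]
    rw [Finset.sum_const, Finset.card_univ]
    simp
    ring
  -- put it together
  have hrw : (fun ω' => (∑ i, w i * (x i * ((m i ω' : ℝ) / (k * p i))) -
        ∫ ω'', ∑ i, w i * (x i * ((m i ω'' : ℝ) / (k * p i))) ∂ν) ^ 2)
      = fun ω' => (S ω' * S ω' - (2 * (k * E1)) * S ω') + (k * E1) ^ 2 := by
    funext ω'
    have hc : (∫ ω'', ∑ i, w i * (x i * ((m i ω'' : ℝ) / (k * p i))) ∂ν) = k * E1 := by
      rw [show (fun ω'' => ∑ i, w i * (x i * ((m i ω'' : ℝ) / (k * p i))))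
          = S from funext hS]
      exact hES
    rw [hS ω', hc]
    show (S ω' - k * E1) ^ 2 = _
    ring
  have hint2 : Integrable (fun ω' => (2 * ((k:ℝ) * E1)) * S ω') ν := by
    exact hSint.const_mul _
  have hint1 : Integrable (fun ω' => S ω' * S ω' - (2 * ((k:ℝ) * E1)) * S ω') ν := by
    exact hS2int.sub hint2
  rw [hrw, integral_add hint1 (integrable_const _),
    integral_sub hS2int hint2, integral_const_mul, hES, hES2, integral_const]
  simp only [measure_univ, ENNReal.toReal_one, probReal_univ, smul_eq_mul, one_mul]
  have hE2v : E2 = (1 / (k:ℝ) ^ 2) * ∑ i, w i ^ 2 * x i ^ 2 / p i := by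
    rw [hE2, Finset.mul_sum]
    refine Finset.sum_congr rfl fun i _ => ?_
    simp only [hg]
    field_simp [(hp i).ne']
  have hE1v : E1 = (1 / (k:ℝ)) * ∑ i, w i * x i := by
    rw [hE1, Finset.mul_sum]
    refine Finset.sum_congr rfl fun i _ => ?_
    simp only [hg]
    field_simp [(hp i).ne']
  rw [hE2v, hE1v]
  field_simp
  ring

/-- tight upper bound on the approximate dropout regularizer
`R̂(w) = (1/2) E_x[q(wᵀx)(1-q(wᵀx)) Var_ε(wᵀ(x∘ε))]` for multinomial dropout noise:
`R̂(w) ≤ (1/(8k)) (Σ_i w i ^ 2 E[x i ^ 2]/p i - E[(wᵀx)²])`. -/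
theorem approx_regularizer_tight_bound {d k : ℕ} (hk : 1 ≤ k)
    {Ω : Type*} [MeasurableSpace Ω] (μ : Measure Ω) [IsProbabilityMeasure μ]
    {Ω' : Type*} [MeasurableSpace Ω'] (ν : Measure Ω') [IsProbabilityMeasure ν]
    (X : Ω → Fin d → ℝ) (hXmeas : Measurable X)
    (hXint : ∀ i, Integrable (fun ω => (X ω i) ^ 2) μ)
    (p : Fin d → ℝ) (hp : ∀ i, 0 < p i) (hpsum : ∑ i, p i = 1)
    (T : Fin k → Ω' → Fin d) (hTmeas : ∀ j, Measurable (T j))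
    (hTindep : iIndepFun T ν)
    (hTdist : ∀ j i, ν {ω' | T j ω' = i} = ENNReal.ofReal (p i))
    (m : Fin d → Ω' → ℕ)
    (hm : ∀ i ω', m i ω' = (Finset.univ.filter (fun j => T j ω' = i)).card)
    -- `Varε x w` is the variance over the dropout noise of `wᵀ(x∘ε)` for fixed `x`
    (Varε : (Fin d → ℝ) → (Fin d → ℝ) → ℝ)
    (hVar : ∀ x w, Varε x w =
      ∫ ω', (∑ i, w i * (x i * ((m i ω' : ℝ) / (k * p i))) -
        ∫ ω'', ∑ i, w i * (x i * ((m i ω'' : ℝ) / (k * p i))) ∂ν) ^ 2 ∂ν)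
    -- `q(z) = 1/(1+exp(-z/2))`
    (q : ℝ → ℝ) (hq : ∀ z, q z = 1 / (1 + Real.exp (-z / 2)))
    -- the approximate dropout regularizer
    (Rhat : (Fin d → ℝ) → ℝ)
    (hRhat : ∀ w, Rhat w =
      (1 / 2) * ∫ ω, q (∑ i, w i * X ω i) * (1 - q (∑ i, w i * X ω i)) * Varε (X ω) w ∂μ)
    (hRint : ∀ w : Fin d → ℝ, Integrable
      (fun ω => q (∑ i, w i * X ω i) * (1 - q (∑ i, w i * X ω i)) * Varε (X ω) w) μ) :
    ∀ w : Fin d → ℝ, Rhat w ≤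
      (1 / (8 * k)) *
        (∑ i, w i ^ 2 * (∫ ω, (X ω i) ^ 2 ∂μ) / p i - ∫ ω, (∑ i, w i * X ω i) ^ 2 ∂μ) := by
  intro w
  have hkpos : (0 : ℝ) < k := by exact_mod_cast hk
  have hVareq : ∀ x : Fin d → ℝ, Varε x w
      = (1 / k) * (∑ i, w i ^ 2 * x i ^ 2 / p i - (∑ i, w i * x i) ^ 2) := fun x => by
    rw [hVar]
    exact multinomial_var hk ν p hp T hTmeas hTindep hTdist m hm x w
  have hVarnn : ∀ x : Fin d → ℝ, 0 ≤ Varε x w := fun x => by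
    rw [hVar]
    exact integral_nonneg fun ω' => sq_nonneg _
  -- integrability of the pieces
  have hterm : ∀ i : Fin d, Integrable (fun ω => w i ^ 2 * (X ω i) ^ 2 / p i) μ := by
    intro i
    have : (fun ω => w i ^ 2 * (X ω i) ^ 2 / p i)
        = fun ω => (w i ^ 2 / p i) * (X ω i) ^ 2 := by
      funext ω; ring
    rw [this]
    exact (hXint i).const_mul _
  have hmeas_sum : Measurable (fun ω => ∑ i, w i * X ω i) :=
    Finset.measurable_sum _ (fun i _ => measurable_const.mul ((measurable_pi_apply i).comp hXmeas))
  have hsq : Integrable (fun ω => (∑ i, w i * X ω i) ^ 2) μ := by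
    refine Integrable.mono'
      ((integrable_finset_sum Finset.univ (fun i (_ : i ∈ Finset.univ) =>
        (hXint i).const_mul (w i ^ 2))).const_mul (d : ℝ))
      ((hmeas_sum.pow_const 2).aestronglyMeasurable) ?_
    filter_upwards with ω
    rw [Real.norm_eq_abs, abs_of_nonneg (sq_nonneg _)]
    calc (∑ i, w i * X ω i) ^ 2
        ≤ (Finset.univ : Finset (Fin d)).card * ∑ i, (w i * X ω i) ^ 2 :=
          sq_sum_le_card_mul_sum_sq
      _ = (d : ℝ) * ∑ i, w i ^ 2 * (X ω i) ^ 2 := by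
          simp [Finset.card_univ, mul_pow]
  have hAint : Integrable (fun ω => ∑ i, w i ^ 2 * (X ω i) ^ 2 / p i) μ :=
    integrable_finset_sum _ (fun i _ => hterm i)
  have hVint : Integrable (fun ω => Varε (X ω) w) μ := by
    have hrep : (fun ω => Varε (X ω) w)
        = fun ω => (1 / (k : ℝ)) *
          ((∑ i, w i ^ 2 * (X ω i) ^ 2 / p i) - (∑ i, w i * X ω i) ^ 2) := by
      funext ω; rw [hVareq]
    rw [hrep]
    exact (hAint.sub hsq).const_mul _
  -- pointwise bound
  have hle : (fun ω => q (∑ i, w i * X ω i) * (1 - q (∑ i, w i * X ω i)) * Varε (X ω) w)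
      ≤ fun ω => (1 / 4) * Varε (X ω) w := by
    intro ω
    have h14 : q (∑ i, w i * X ω i) * (1 - q (∑ i, w i * X ω i)) ≤ 1 / 4 := by
      nlinarith [sq_nonneg (q (∑ i, w i * X ω i) - 1 / 2)]
    exact mul_le_mul_of_nonneg_right h14 (hVarnn (X ω))
  have hmono := integral_mono (hRint w) (hVint.const_mul (1 / 4)) hle
  -- compute the right-hand integral
  have hAi : ∀ i : Fin d, (∫ ω, w i ^ 2 * (X ω i) ^ 2 / p i ∂μ)
      = w i ^ 2 * (∫ ω, (X ω i) ^ 2 ∂μ) / p i := by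
    intro i
    rw [show (fun ω => w i ^ 2 * (X ω i) ^ 2 / p i)
        = fun ω => (w i ^ 2 / p i) * (X ω i) ^ 2 from funext fun ω => by ring,
      integral_const_mul]
    ring
  have hRHS : (∫ ω, (1 / 4) * Varε (X ω) w ∂μ)
      = (1 / 4) * ((1 / k) *
        ((∑ i, w i ^ 2 * (∫ ω, (X ω i) ^ 2 ∂μ) / p i) - ∫ ω, (∑ i, w i * X ω i) ^ 2 ∂μ)) := by
    rw [integral_const_mul]
    congr 1
    have hrep : (fun ω => Varε (X ω) w)
        = fun ω => (1 / (k : ℝ)) *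
          ((∑ i, w i ^ 2 * (X ω i) ^ 2 / p i) - (∑ i, w i * X ω i) ^ 2) := by
      funext ω; rw [hVareq]
    rw [hrep, integral_const_mul, integral_sub hAint hsq,
      integral_finset_sum _ (fun i _ => hterm i)]
    congr 1
    congr 1
    exact Finset.sum_congr rfl fun i _ => hAi i
  rw [hRhat w]
  have : (1 : ℝ) / 2 * (∫ ω, q (∑ i, w i * X ω i) * (1 - q (∑ i, w i * X ω i)) * Varε (X ω) w ∂μ)
      ≤ 1 / 2 * ∫ ω, (1 / 4) * Varε (X ω) w ∂μ := by linarith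
  refine le_trans this ?_
  rw [hRHS]
  have hne : (k : ℝ) ≠ 0 := hkpos.ne'
  field_simp
  linarith
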